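/- The inclusion chain decide[CFTR] ⊆ decide[CFpoly] ⊆ decide[CF] holds: every terminating CFTR program is a CFpoly program, so every set decided by a CFTR program is decided by a CFpoly program, and every set decided by a CFpoly program is decided by a CF program. -/

import Mathlib

/-! # Cons-free programs (CF / CFTR / CFpoly / NCF) and Turing-machine complexity classes -/

/-- Values: booleans and bit strings. -/
inductive Val : Type
  | bool : Bool → Val
  | str  : List Bool → Val
deriving DecidableEq, Inhabited

/-- Base operations of cons-free programs. -/
inductive BOp : Type
  | not | null | head | tail
deriving DecidableEq, Inhabited

/-- Expressions.  `amb` is the nondeterministic choice construct of NCF;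
CF programs are exactly the choice-free programs. -/
inductive Exp : Type
  | tt   : Exp
  | ff   : Exp
  | nil  : Exp
  | var  : Nat → Exp
  | base : BOp → Exp → Exp
  | ite  : Exp → Exp → Exp → Exp
  | call : Nat → List Exp → Exp
  | amb  : Exp → Exp → Exp
deriving Inhabited

/-- A function definition `f x1 ... xm = e`: arity `m` and body `e`
(variables are de Bruijn-style indices into the argument list). -/
structure Defn where
  arity : Nat
  body  : Exp
deriving Inhabited

/-- A program is a finite list of function definitions; the first one is the entry point. -/
abbrev Prog := List Defn

/-- Body of the entry (first) function. -/
def Prog.entry (p : Prog) : Exp := p.headI.body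

/-- Semantics of the base functions (partial). -/
def evalBase : BOp → Val → Option Val
  | .not,  .bool b       => some (.bool (!b))
  | .null, .str s        => some (.bool s.isEmpty)
  | .head, .str (b :: _) => some (.bool b)
  | .tail, .str (_ :: s) => some (.str s)
  | _,     _             => none

/- Call-by-value big-step semantics.  `EvalH p ρ e v n h` means: in environment `ρ`
the expression `e` evaluates to `v`, by a computation (proof) tree with `n` nodes
whose call history (the sequence of configurations `(f, arguments)` of calls to
program-defined functions, in evaluation order) is `h`. -/
mutual
inductive EvalH (p : Prog) : List Val → Exp → Val → Nat → List (Nat × List Val) → Prop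
  | tt  {ρ} : EvalH p ρ .tt (.bool true) 1 []
  | ff  {ρ} : EvalH p ρ .ff (.bool false) 1 []
  | nil {ρ} : EvalH p ρ .nil (.str []) 1 []
  | var {ρ : List Val} {i : Nat} {v} : ρ[i]? = some v → EvalH p ρ (.var i) v 1 []
  | base {ρ op e v w n h} :
      EvalH p ρ e v n h → evalBase op v = some w →
      EvalH p ρ (.base op e) w (n + 1) h
  | iteT {ρ e0 e1 e2 v n0 n1 h0 h1} :
      EvalH p ρ e0 (.bool true) n0 h0 → EvalH p ρ e1 v n1 h1 →
      EvalH p ρ (.ite e0 e1 e2) v (n0 + n1 + 1) (h0 ++ h1)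
  | iteF {ρ e0 e1 e2 v n0 n2 h0 h2} :
      EvalH p ρ e0 (.bool false) n0 h0 → EvalH p ρ e2 v n2 h2 →
      EvalH p ρ (.ite e0 e1 e2) v (n0 + n2 + 1) (h0 ++ h2)
  | ambL {ρ e1 e2 v n h} :
      EvalH p ρ e1 v n h → EvalH p ρ (.amb e1 e2) v (n + 1) h
  | ambR {ρ e1 e2 v n h} :
      EvalH p ρ e2 v n h → EvalH p ρ (.amb e1 e2) v (n + 1) h
  | call {ρ : List Val} {f : Nat} {es ws d v m n hs h} :
      p[f]? = some d → EvalArgsH p ρ es ws m hs → ws.length = d.arity →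
      EvalH p ws d.body v n h →
      EvalH p ρ (.call f es) v (m + n + 1) (hs ++ (f, ws) :: h)

inductive EvalArgsH (p : Prog) : List Val → List Exp → List Val → Nat → List (Nat × List Val) → Prop
  | nil {ρ} : EvalArgsH p ρ [] [] 0 []
  | cons {ρ e es v vs n m h hs} :
      EvalH p ρ e v n h → EvalArgsH p ρ es vs m hs →
      EvalArgsH p ρ (e :: es) (v :: vs) (n + m) (h ++ hs)
end

/-- `p, ρ ⊢ e → v`. -/
def Eval (p : Prog) (ρ : List Val) (e : Exp) (v : Val) : Prop := ∃ n h, EvalH p ρ e v n h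

/-- Pointwise evaluation of a list of expressions. -/
def EvalList (p : Prog) (ρ : List Val) (es : List Exp) (ws : List Val) : Prop :=
  List.Forall₂ (Eval p ρ) es ws

/-- `⟦p⟧(x) = v` with computation-tree size `n` and call history `h`. -/
def RunH (p : Prog) (x : List Bool) (v : Val) (n : Nat) (h : List (Nat × List Val)) : Prop :=
  EvalH p [Val.str x] p.entry v n h

/-- `⟦p⟧(x) = v`. -/
def Run (p : Prog) (x : List Bool) (v : Val) : Prop := ∃ n h, RunH p x v n h

/-- `time_p(x) = n`: the computation tree `T^{p,x}` has `n` nodes. -/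
def TimeIs (p : Prog) (x : List Bool) (n : Nat) : Prop := ∃ v h, RunH p x v n h

/-- Deterministic decision: `p` terminates on every input, answering `True` exactly on `X`. -/
def Decides (p : Prog) (X : Set (List Bool)) : Prop :=
  ∀ x : List Bool, (x ∈ X ∧ Run p x (.bool true)) ∨ (x ∉ X ∧ Run p x (.bool false))

/-- Nondeterministic decision: `x ∈ X` iff some computation `⟦p⟧(x) ⇝ True` exists. -/
def NDecides (p : Prog) (X : Set (List Bool)) : Prop :=
  ∀ x : List Bool, x ∈ X ↔ Run p x (.bool true)

/-- `Reach_p(x)`: configurations `(f, ρ)` called at least once in some computation of `p` on `x`. -/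
def Reach (p : Prog) (x : List Bool) : Set (Nat × List Val) :=
  {c | ∃ v n h, RunH p x v n h ∧ c ∈ h}

/-- `V_x = {0,1} ∪ suffixes(x)`: the range of variation on input `x`. -/
def Vx (x : List Bool) : Set Val :=
  {v | (∃ b, v = .bool b) ∨ ∃ s, v = .str s ∧ s <:+ x}

/-- An expression is choice-free (belongs to the CF fragment). -/
inductive NoChoice : Exp → Prop
  | tt : NoChoice .tt
  | ff : NoChoice .ff
  | nil : NoChoice .nil
  | var (i) : NoChoice (.var i)
  | base (op) {e} : NoChoice e → NoChoice (.base op e)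
  | ite {a b c} : NoChoice a → NoChoice b → NoChoice c → NoChoice (.ite a b c)
  | call (f) {es} : (∀ e ∈ es, NoChoice e) → NoChoice (.call f es)

/-- A CF program: a cons-free program with no nondeterministic choice. -/
def CFProg (p : Prog) : Prop := ∀ d ∈ p, NoChoice d.body

/-- Does the expression contain a call to a program-defined function? -/
def hasCall : Exp → Bool
  | .base _ e => hasCall e
  | .ite a b c => hasCall a || hasCall b || hasCall c
  | .call _ _ => true
  | .amb a b => hasCall a || hasCall b
  | _ => false

/-- The classification map `α` with `X = 0 < T = 1 < N = 2`:
`α e = 0` if `e` has no calls; `α e = 1` if all calls in `e` are in tail position;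
`α e = 2` otherwise. -/
def alpha : Exp → Nat
  | .base _ e => if hasCall e then 2 else 0
  | .ite a b c => if hasCall a then 2 else max (alpha b) (alpha c)
  | .call _ es => if es.all (fun e => !hasCall e) then 1 else 2
  | .amb a b => max (alpha a) (alpha b)
  | _ => 0

/-- All calls in every definition body are in tail position (`α(e^f) ∈ {X, T}`). -/
def TRProg (p : Prog) : Prop := ∀ d ∈ p, alpha d.body ≤ 1

/-- A CFTR program: a tail-recursive cons-free program. -/
def CFTRProg (p : Prog) : Prop := CFProg p ∧ TRProg p

/-- Every call in the program is a tail call or a linear call, i.e. no call to a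
defined function is nested inside the argument of another call. -/
def linearOnly : Exp → Bool
  | .base _ e => linearOnly e
  | .ite a b c => linearOnly a && linearOnly b && linearOnly c
  | .call _ es => es.all (fun e => !hasCall e)
  | .amb a b => linearOnly a && linearOnly b
  | _ => true

/-- A CFpoly program: a CF program that terminates on all inputs, in polynomial native time. -/
def CFpolyProg (p : Prog) : Prop :=
  CFProg p ∧ (∀ x, ∃ v, Run p x v) ∧
    ∃ π : Polynomial ℕ, ∀ x n, TimeIs p x n → n ≤ π.eval x.length

/-- A judgment `p, ρ ⊢ e → v` occurs in the computation tree `T^{p,x}`. -/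
inductive Occurs (p : Prog) (x : List Bool) : List Val → Exp → Val → Prop
  | root {v} : Eval p [Val.str x] p.entry v → Occurs p x [Val.str x] p.entry v
  | base {ρ op e v w} : Occurs p x ρ (.base op e) v → Eval p ρ e w → Occurs p x ρ e w
  | iteTest {ρ a b c v w} : Occurs p x ρ (.ite a b c) v → Eval p ρ a w → Occurs p x ρ a w
  | iteT {ρ a b c v} : Occurs p x ρ (.ite a b c) v → Eval p ρ a (.bool true) →
      Eval p ρ b v → Occurs p x ρ b v
  | iteF {ρ a b c v} : Occurs p x ρ (.ite a b c) v → Eval p ρ a (.bool false) →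
      Eval p ρ c v → Occurs p x ρ c v
  | ambL {ρ a b v} : Occurs p x ρ (.amb a b) v → Eval p ρ a v → Occurs p x ρ a v
  | ambR {ρ a b v} : Occurs p x ρ (.amb a b) v → Eval p ρ b v → Occurs p x ρ b v
  | arg {ρ f es v e w} : Occurs p x ρ (.call f es) v → e ∈ es → Eval p ρ e w → Occurs p x ρ e w
  | body {ρ f es ws d v} : Occurs p x ρ (.call f es) v → p[f]? = some d →
      EvalList p ρ es ws → Eval p ws d.body v → Occurs p x ws d.body v

/- The deterministic left-to-right bottom-up evaluator, with fuel bounding call depth. -/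
mutual
def evalFuel (p : Prog) : Nat → List Val → Exp → Option Val
  | _, _, .tt => some (.bool true)
  | _, _, .ff => some (.bool false)
  | _, _, .nil => some (.str [])
  | _, ρ, .var i => ρ[i]?
  | k, ρ, .base op e => (evalFuel p k ρ e).bind (evalBase op)
  | k, ρ, .ite a b c =>
      match evalFuel p k ρ a with
      | some (.bool true) => evalFuel p k ρ b
      | some (.bool false) => evalFuel p k ρ c
      | _ => none
  | _, _, .amb _ _ => none
  | k, ρ, .call f es =>
      match evalArgsFuel p k ρ es with
      | some ws =>
          match k, p[f]? with
          | k' + 1, some d => if ws.length = d.arity then evalFuel p k' ws d.body else none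
          | _, _ => none
      | none => none
termination_by k _ e => (k, sizeOf e)
decreasing_by
  all_goals first
    | decreasing_tactic
    | (simp only [wfParam] at *; decreasing_tactic)
    | (apply Prod.Lex.left; simp [wfParam])
    | (simp_wf; simp [wfParam])

def evalArgsFuel (p : Prog) : Nat → List Val → List Exp → Option (List Val)
  | _, _, [] => some []
  | k, ρ, e :: es =>
      match evalFuel p k ρ e, evalArgsFuel p k ρ es with
      | some v, some vs => some (v :: vs)
      | _, _ => none
termination_by k _ es => (k, sizeOf es)
end

/-! ## Turing machines -/

/-- Head moves. -/
inductive Dir : Type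
  | L | S | R
deriving DecidableEq, Inhabited

def Dir.z : Dir → ℤ
  | .L => -1
  | .S => 0
  | .R => 1

/-- A configuration: control state, input-head position, work-head position, work tape. -/
structure Cfg (Q : Type) where
  q : Q
  ipos : ℤ
  wpos : ℤ
  tape : ℤ → Option Bool

/-- The symbol of the read-only input tape at position `i` (blank outside the input). -/
def inputSym (x : List Bool) (i : ℤ) : Option Bool :=
  if 0 ≤ i then x[i.toNat]? else none

/-- A deterministic Turing machine with a read-only input tape and a read-write work tape. -/
structure TM where
  Q : Type
  [fin : Fintype Q]
  [deq : DecidableEq Q]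
  δ : Q → Option Bool → Option Bool → Q × Option Bool × Dir × Dir
  start : Q
  accept : Q
  reject : Q

attribute [instance] TM.fin TM.deq

def TM.init (M : TM) : Cfg M.Q := ⟨M.start, 0, 0, fun _ => none⟩

/-- One deterministic step (the accepting and rejecting states are halting). -/
def TM.step (M : TM) (x : List Bool) (c : Cfg M.Q) : Cfg M.Q :=
  if c.q = M.accept ∨ c.q = M.reject then c
  else
    let r := M.δ c.q (inputSym x c.ipos) (c.tape c.wpos)
    ⟨r.1, c.ipos + r.2.2.1.z, c.wpos + r.2.2.2.z,
      fun j => if j = c.wpos then r.2.1 else c.tape j⟩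

/-- Configuration after `t` steps on input `x`. -/
def TM.conf (M : TM) (x : List Bool) (t : Nat) : Cfg M.Q := (M.step x)^[t] M.init

/-- `M` decides `X`: reaches `accept` on members, `reject` on non-members. -/
def TM.DecidesTM (M : TM) (X : Set (List Bool)) : Prop :=
  ∀ x : List Bool,
    (x ∈ X → ∃ t, (M.conf x t).q = M.accept) ∧ (x ∉ X → ∃ t, (M.conf x t).q = M.reject)

/-- The work head of `M` stays within `s` cells of the origin on input `x`. -/
def TM.SpaceBound (M : TM) (x : List Bool) (s : Nat) : Prop :=
  ∀ t, ((M.conf x t).wpos).natAbs ≤ s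

/-- `M` halts within `T` steps on input `x`. -/
def TM.HaltsIn (M : TM) (x : List Bool) (T : Nat) : Prop :=
  ∃ t ≤ T, (M.conf x t).q = M.accept ∨ (M.conf x t).q = M.reject

/-- LOGSPACE: decidable by a deterministic TM in `O(log n)` work space. -/
def LOGSPACE : Set (Set (List Bool)) :=
  {X | ∃ M : TM, M.DecidesTM X ∧
        ∃ C : Nat, ∀ x, M.SpaceBound x (C * (Nat.log 2 x.length + 1))}

/-- PTIME: decidable by a deterministic TM in time `O(n^k)` for some `k`. -/
def PTIME : Set (Set (List Bool)) :=
  {X | ∃ M : TM, M.DecidesTM X ∧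
        ∃ C k : Nat, ∀ x, M.HaltsIn x (C * (x.length + 1) ^ k)}

/-- A nondeterministic Turing machine (read-only input tape, read-write work tape). -/
structure NTM where
  Q : Type
  [fin : Fintype Q]
  δ : Q → Option Bool → Option Bool → Finset (Q × Option Bool × Dir × Dir)
  start : Q
  accept : Q

attribute [instance] NTM.fin

def NTM.init (M : NTM) : Cfg M.Q := ⟨M.start, 0, 0, fun _ => none⟩

/-- One nondeterministic step. -/
def NTM.Step (M : NTM) (x : List Bool) (c c' : Cfg M.Q) : Prop :=
  ∃ r ∈ M.δ c.q (inputSym x c.ipos) (c.tape c.wpos),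
    c' = ⟨r.1, c.ipos + r.2.2.1.z, c.wpos + r.2.2.2.z,
          fun j => if j = c.wpos then r.2.1 else c.tape j⟩

/-- A step staying within work space `s`. -/
def NTM.StepB (M : NTM) (x : List Bool) (s : Nat) (c c' : Cfg M.Q) : Prop :=
  M.Step x c c' ∧ c'.wpos.natAbs ≤ s

/-- Some computation path within work space `s` accepts `x`. -/
def NTM.AcceptsInSpace (M : NTM) (x : List Bool) (s : Nat) : Prop :=
  ∃ c : Cfg M.Q, Relation.ReflTransGen (M.StepB x s) M.init c ∧ c.q = M.accept

/-- Nondeterministic space classes `NSPACE(O(f))`. -/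
def NSPACEF (f : Nat → Nat) : Set (Set (List Bool)) :=
  {X | ∃ (M : NTM) (C : Nat), ∀ x, x ∈ X ↔ M.AcceptsInSpace x (C * (f x.length + 1))}

/-- NLOGSPACE = NSPACE(O(log n)). -/
def NLOGSPACE : Set (Set (List Bool)) := NSPACEF (Nat.log 2)

/-! ## Decision classes of the programming languages -/

def decideCFTR : Set (Set (List Bool)) := {X | ∃ p : Prog, CFTRProg p ∧ Decides p X}
def decideCF : Set (Set (List Bool)) := {X | ∃ p : Prog, CFProg p ∧ Decides p X}
def decideCFpoly : Set (Set (List Bool)) := {X | ∃ p : Prog, CFpolyProg p ∧ Decides p X}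
def decideNCF : Set (Set (List Bool)) := {X | ∃ p : Prog, NDecides p X}
def decideNCFTR : Set (Set (List Bool)) := {X | ∃ p : Prog, TRProg p ∧ NDecides p X}


/-! ## Auxiliary lemmas for the inclusion chain -/

section Chain

theorem mem_of_getElem?' {α} {l : List α} {n : Nat} {a : α} (h : l[n]? = some a) : a ∈ l := by
  obtain ⟨hn, rfl⟩ := List.getElem?_eq_some_iff.mp h
  exact List.getElem_mem hn

theorem lt_length_of_getElem?' {α} {l : List α} {n : Nat} {a : α} (h : l[n]? = some a) :
    n < l.length :=
  (List.getElem?_eq_some_iff.mp h).1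

theorem evalH_pos {p ρ e v n h} (H : EvalH p ρ e v n h) : 1 ≤ n := by
  cases H <;> omega

/-- Expressions without calls produce empty call histories. -/
theorem noCall_all (p : Prog) : ∀ N : Nat,
    (∀ ρ e v n h, n ≤ N → hasCall e = false → EvalH p ρ e v n h → h = []) ∧
    (∀ ρ es ws m hs, m ≤ N → (∀ e ∈ es, hasCall e = false) →
      EvalArgsH p ρ es ws m hs → hs = []) := by
  intro N
  induction N using Nat.strong_induction_on with
  | _ N IH =>
    have hP : ∀ ρ e v n h, n ≤ N → hasCall e = false → EvalH p ρ e v n h → h = [] := by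
      intro ρ e v n h hn hc H
      cases H with
      | tt => rfl
      | ff => rfl
      | nil => rfl
      | var _ => rfl
      | @base _ op e' v' w n' h' He _ =>
          have he : hasCall e' = false := by simpa [hasCall] using hc
          have hp := evalH_pos He
          exact (IH n' (by omega)).1 _ _ _ _ _ le_rfl he He
      | @iteT _ e0 e1 e2 v' n0 n1 h0 h1 He0 He1 =>
          simp only [hasCall, Bool.or_eq_false_iff] at hc
          have h0e := (IH n0 (by have := evalH_pos He1; omega)).1 _ _ _ _ _ le_rfl hc.1.1 He0
          have h1e := (IH n1 (by have := evalH_pos He0; omega)).1 _ _ _ _ _ le_rfl hc.1.2 He1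
          simp [h0e, h1e]
      | @iteF _ e0 e1 e2 v' n0 n2 h0 h2 He0 He2 =>
          simp only [hasCall, Bool.or_eq_false_iff] at hc
          have h0e := (IH n0 (by have := evalH_pos He2; omega)).1 _ _ _ _ _ le_rfl hc.1.1 He0
          have h2e := (IH n2 (by have := evalH_pos He0; omega)).1 _ _ _ _ _ le_rfl hc.2 He2
          simp [h0e, h2e]
      | @ambL _ e1 e2 v' n' h' He =>
          simp only [hasCall, Bool.or_eq_false_iff] at hc
          exact (IH n' (by omega)).1 _ _ _ _ _ le_rfl hc.1 He
      | @ambR _ e1 e2 v' n' h' He =>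
          simp only [hasCall, Bool.or_eq_false_iff] at hc
          exact (IH n' (by omega)).1 _ _ _ _ _ le_rfl hc.2 He
      | call _ _ _ _ => simp [hasCall] at hc
    refine ⟨hP, ?_⟩
    intro ρ es ws m hs hm hc H
    cases H with
    | nil => rfl
    | @cons _ e es' v' vs n' m' h' hs' Hh Ht =>
        have h1 := hP _ _ _ _ _ (by omega) (hc e (by simp)) Hh
        have h2 := (IH m' (by have := evalH_pos Hh; omega)).2 _ _ _ _ _ le_rfl
          (fun e' he' => hc e' (by simp [he'])) Ht
        simp [h1, h2]

/-- Determinism of choice-free evaluation. -/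
theorem det_all (p : Prog) (hp : CFProg p) : ∀ N : Nat,
    (∀ ρ e v n h, n ≤ N → NoChoice e → EvalH p ρ e v n h →
       ∀ v' n' h', EvalH p ρ e v' n' h' → v = v' ∧ n = n' ∧ h = h') ∧
    (∀ ρ es ws m hs, m ≤ N → (∀ e ∈ es, NoChoice e) → EvalArgsH p ρ es ws m hs →
       ∀ ws' m' hs', EvalArgsH p ρ es ws' m' hs' → ws = ws' ∧ m = m' ∧ hs = hs') := by
  intro N
  induction N using Nat.strong_induction_on with
  | _ N IH =>
    have hP : ∀ ρ e v n h, n ≤ N → NoChoice e → EvalH p ρ e v n h →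
       ∀ v' n' h', EvalH p ρ e v' n' h' → v = v' ∧ n = n' ∧ h = h' := by
      intro ρ e v n h hn hnc H v' n' h' H'
      cases H with
      | tt => cases H'; exact ⟨rfl, rfl, rfl⟩
      | ff => cases H'; exact ⟨rfl, rfl, rfl⟩
      | nil => cases H'; exact ⟨rfl, rfl, rfl⟩
      | var hv =>
          cases H' with
          | var hv' => rw [hv] at hv'; exact ⟨Option.some.inj hv', rfl, rfl⟩
      | @base _ op e1 v1 w1 n1 h1 He hb =>
          cases H' with
          | @base _ _ _ v2 w2 n2 h2 He' hb' =>
              cases hnc with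
              | base _ hnc' =>
                obtain ⟨rfl, rfl, rfl⟩ :=
                  (IH n1 (by omega)).1 _ _ _ _ _ le_rfl hnc' He _ _ _ He'
                rw [hb] at hb'
                exact ⟨Option.some.inj hb', rfl, rfl⟩
      | @iteT _ e0 e1 e2 v1 n0 n1 h0 h1 He0 He1 =>
          cases hnc with
          | ite ha hb hc =>
            have hn1 := evalH_pos He1
            have hn0 := evalH_pos He0
            cases H' with
            | iteT He0' He1' =>
                obtain ⟨_, rfl, rfl⟩ := (IH n0 (by omega)).1 _ _ _ _ _ le_rfl ha He0 _ _ _ He0'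
                obtain ⟨rfl, rfl, rfl⟩ := (IH n1 (by omega)).1 _ _ _ _ _ le_rfl hb He1 _ _ _ He1'
                exact ⟨rfl, rfl, rfl⟩
            | iteF He0' He2' =>
                obtain ⟨hvv, -, -⟩ := (IH n0 (by omega)).1 _ _ _ _ _ le_rfl ha He0 _ _ _ He0'
                cases hvv
      | @iteF _ e0 e1 e2 v1 n0 n2 h0 h2 He0 He2 =>
          cases hnc with
          | ite ha hb hc =>
            have hn2 := evalH_pos He2
            have hn0 := evalH_pos He0
            cases H' with
            | iteT He0' He1' =>
                obtain ⟨hvv, -, -⟩ := (IH n0 (by omega)).1 _ _ _ _ _ le_rfl ha He0 _ _ _ He0'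
                cases hvv
            | iteF He0' He2' =>
                obtain ⟨_, rfl, rfl⟩ := (IH n0 (by omega)).1 _ _ _ _ _ le_rfl ha He0 _ _ _ He0'
                obtain ⟨rfl, rfl, rfl⟩ := (IH n2 (by omega)).1 _ _ _ _ _ le_rfl hc He2 _ _ _ He2'
                exact ⟨rfl, rfl, rfl⟩
      | ambL He => cases hnc
      | ambR He => cases hnc
      | @call _ f es ws1 d v1 m1 n1 hs1 hb1 hd Hargs hlen Hbody =>
          cases hnc with
          | call _ hes =>
            have hm1 : 1 ≤ n1 := evalH_pos Hbody
            cases H' with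
            | @call _ _ _ ws2 d2 v2 m2 n2 hs2 hb2 hd' Hargs' hlen' Hbody' =>
                rw [hd] at hd'
                obtain rfl : d = d2 := Option.some.inj hd'
                obtain ⟨rfl, rfl, rfl⟩ :=
                  (IH m1 (by omega)).2 _ _ _ _ _ le_rfl hes Hargs _ _ _ Hargs'
                have hncb : NoChoice d.body := hp d (mem_of_getElem?' hd)
                obtain ⟨rfl, rfl, rfl⟩ :=
                  (IH n1 (by omega)).1 _ _ _ _ _ le_rfl hncb Hbody _ _ _ Hbody'
                exact ⟨rfl, rfl, rfl⟩
    refine ⟨hP, ?_⟩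
    intro ρ es ws m hs hm hnc H ws' m' hs' H'
    cases H with
    | nil => cases H'; exact ⟨rfl, rfl, rfl⟩
    | @cons _ e es1 v1 vs1 n1 m1 h1 hs1 Hh Ht =>
        cases H' with
        | cons Hh' Ht' =>
            have hp1 := evalH_pos Hh
            obtain ⟨rfl, rfl, rfl⟩ :=
              hP _ _ _ _ _ (by omega) (hnc e (by simp)) Hh _ _ _ Hh'
            obtain ⟨rfl, rfl, rfl⟩ := (IH m1 (by omega)).2 _ _ _ _ _ le_rfl
              (fun e' he' => hnc e' (by simp [he'])) Ht _ _ _ Ht'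
            exact ⟨rfl, rfl, rfl⟩

end Chain
section Chain2

theorem evalBase_vx {x : List Bool} {op v w} (hv : v ∈ Vx x) (h : evalBase op v = some w) :
    w ∈ Vx x := by
  cases op with
  | not =>
      cases v with
      | bool b => simp [evalBase] at h; exact h ▸ Or.inl ⟨_, rfl⟩
      | str s => simp [evalBase] at h
  | null =>
      cases v with
      | bool b => simp [evalBase] at h
      | str s => simp [evalBase] at h; exact h ▸ Or.inl ⟨_, rfl⟩
  | head =>
      cases v with
      | bool b => simp [evalBase] at h
      | str s =>
          cases s with
          | nil => simp [evalBase] at h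
          | cons b t => simp [evalBase] at h; exact h ▸ Or.inl ⟨_, rfl⟩
  | tail =>
      cases v with
      | bool b => simp [evalBase] at h
      | str s =>
          cases s with
          | nil => simp [evalBase] at h
          | cons b t =>
              simp [evalBase] at h
              rcases hv with ⟨b', hb⟩ | ⟨s', hs, hsx⟩
              · exact absurd hb (by simp)
              · obtain rfl : b :: t = s' := Val.str.inj hs
                exact h ▸ Or.inr ⟨t, rfl, (List.suffix_cons b t).trans hsx⟩

/-- Values appearing anywhere in a computation lie in `Vx x`, and every configuration
in the call history is a well-formed call on a defined function. -/
theorem vx_all (p : Prog) (x : List Bool) : ∀ N : Nat,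
    (∀ ρ e v n h, n ≤ N → EvalH p ρ e v n h → (∀ u ∈ ρ, u ∈ Vx x) →
       v ∈ Vx x ∧ ∀ c ∈ h, (∀ u ∈ c.2, u ∈ Vx x) ∧
         ∃ d, p[c.1]? = some d ∧ c.2.length = d.arity) ∧
    (∀ ρ es ws m hs, m ≤ N → EvalArgsH p ρ es ws m hs → (∀ u ∈ ρ, u ∈ Vx x) →
       (∀ u ∈ ws, u ∈ Vx x) ∧ ∀ c ∈ hs, (∀ u ∈ c.2, u ∈ Vx x) ∧
         ∃ d, p[c.1]? = some d ∧ c.2.length = d.arity) := by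
  intro N
  induction N using Nat.strong_induction_on with
  | _ N IH =>
    have hP : ∀ ρ e v n h, n ≤ N → EvalH p ρ e v n h → (∀ u ∈ ρ, u ∈ Vx x) →
       v ∈ Vx x ∧ ∀ c ∈ h, (∀ u ∈ c.2, u ∈ Vx x) ∧
         ∃ d, p[c.1]? = some d ∧ c.2.length = d.arity := by
      intro ρ e v n h hn H hρ
      cases H with
      | tt => exact ⟨Or.inl ⟨_, rfl⟩, by simp⟩
      | ff => exact ⟨Or.inl ⟨_, rfl⟩, by simp⟩
      | nil => exact ⟨Or.inr ⟨[], rfl, List.nil_suffix⟩, by simp⟩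
      | var hv => exact ⟨hρ _ (mem_of_getElem?' hv), by simp⟩
      | @base _ op e' v' w n' h' He hb =>
          obtain ⟨h1, h2⟩ := (IH n' (by omega)).1 _ _ _ _ _ le_rfl He hρ
          exact ⟨evalBase_vx h1 hb, h2⟩
      | @iteT _ e0 e1 e2 v' n0 n1 h0 h1 He0 He1 =>
          obtain ⟨-, H0⟩ := (IH n0 (by have := evalH_pos He1; omega)).1 _ _ _ _ _ le_rfl He0 hρ
          obtain ⟨hv1, H1⟩ := (IH n1 (by have := evalH_pos He0; omega)).1 _ _ _ _ _ le_rfl He1 hρ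
          refine ⟨hv1, ?_⟩
          intro c hc
          rcases List.mem_append.mp hc with hc | hc
          · exact H0 c hc
          · exact H1 c hc
      | @iteF _ e0 e1 e2 v' n0 n2 h0 h2 He0 He2 =>
          obtain ⟨-, H0⟩ := (IH n0 (by have := evalH_pos He2; omega)).1 _ _ _ _ _ le_rfl He0 hρ
          obtain ⟨hv2, H2⟩ := (IH n2 (by have := evalH_pos He0; omega)).1 _ _ _ _ _ le_rfl He2 hρ
          refine ⟨hv2, ?_⟩
          intro c hc
          rcases List.mem_append.mp hc with hc | hc
          · exact H0 c hc
          · exact H2 c hc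
      | @ambL _ e1 e2 v' n' h' He => exact (IH n' (by omega)).1 _ _ _ _ _ le_rfl He hρ
      | @ambR _ e1 e2 v' n' h' He => exact (IH n' (by omega)).1 _ _ _ _ _ le_rfl He hρ
      | @call _ f es ws d v' m n' hs h' hd Hargs hlen Hbody =>
          have hb1 : 1 ≤ n' := evalH_pos Hbody
          obtain ⟨hws, Hhs⟩ := (IH m (by omega)).2 _ _ _ _ _ le_rfl Hargs hρ
          obtain ⟨hv, Hh'⟩ := (IH n' (by omega)).1 _ _ _ _ _ le_rfl Hbody hws
          refine ⟨hv, ?_⟩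
          intro c hc
          rcases List.mem_append.mp hc with hc | hc
          · exact Hhs c hc
          · rcases List.mem_cons.mp hc with rfl | hc
            · exact ⟨hws, d, hd, hlen⟩
            · exact Hh' c hc
    refine ⟨hP, ?_⟩
    intro ρ es ws m hs hm H hρ
    cases H with
    | nil => exact ⟨by simp, by simp⟩
    | @cons _ e es' v' vs n' m' h' hs' Hh Ht =>
        have hp1 := evalH_pos Hh
        obtain ⟨hv, H1⟩ := hP _ _ _ _ _ (by omega) Hh hρ
        obtain ⟨hvs, H2⟩ := (IH m' (by omega)).2 _ _ _ _ _ le_rfl Ht hρ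
        refine ⟨?_, ?_⟩
        · intro u hu
          rcases List.mem_cons.mp hu with rfl | hu
          · exact hv
          · exact hvs u hu
        · intro c hc
          rcases List.mem_append.mp hc with hc | hc
          · exact H1 c hc
          · exact H2 c hc

/-- Size bound: the tree size is bounded by the expression size plus `S` per call. -/
theorem size_all (p : Prog) (S : Nat) (HS : ∀ d ∈ p, sizeOf d.body < S) : ∀ N : Nat,
    (∀ ρ e v n h, n ≤ N → EvalH p ρ e v n h → n ≤ sizeOf e + S * h.length) ∧
    (∀ ρ es ws m hs, m ≤ N → EvalArgsH p ρ es ws m hs → m ≤ sizeOf es + S * hs.length) := by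
  intro N
  induction N using Nat.strong_induction_on with
  | _ N IH =>
    have hP : ∀ ρ e v n h, n ≤ N → EvalH p ρ e v n h → n ≤ sizeOf e + S * h.length := by
      intro ρ e v n h hn H
      cases H with
      | tt => simp
      | ff => simp
      | nil => simp
      | var hv => simp
      | @base _ op e' v' w n' h' He hb =>
          have h1 := (IH n' (by omega)).1 _ _ _ _ _ le_rfl He
          have h2 : sizeOf op = 1 := by cases op <;> rfl
          simp only [Exp.base.sizeOf_spec, h2]
          linarith
      | @iteT _ e0 e1 e2 v' n0 n1 h0 h1 He0 He1 =>
          have hh0 := (IH n0 (by have := evalH_pos He1; omega)).1 _ _ _ _ _ le_rfl He0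
          have hh1 := (IH n1 (by have := evalH_pos He0; omega)).1 _ _ _ _ _ le_rfl He1
          simp only [List.length_append, Nat.mul_add]
          simp only [Exp.ite.sizeOf_spec]
          linarith
      | @iteF _ e0 e1 e2 v' n0 n2 h0 h2 He0 He2 =>
          have hh0 := (IH n0 (by have := evalH_pos He2; omega)).1 _ _ _ _ _ le_rfl He0
          have hh2 := (IH n2 (by have := evalH_pos He0; omega)).1 _ _ _ _ _ le_rfl He2
          simp only [List.length_append, Nat.mul_add]
          simp only [Exp.ite.sizeOf_spec]
          linarith
      | @ambL _ e1 e2 v' n' h' He =>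
          have h1 := (IH n' (by omega)).1 _ _ _ _ _ le_rfl He
          simp only [Exp.amb.sizeOf_spec]
          linarith
      | @ambR _ e1 e2 v' n' h' He =>
          have h1 := (IH n' (by omega)).1 _ _ _ _ _ le_rfl He
          simp only [Exp.amb.sizeOf_spec]
          linarith
      | @call _ f es ws d v' m n' hs h' hd Hargs hlen Hbody =>
          have hb1 : 1 ≤ n' := evalH_pos Hbody
          have h1 := (IH m (by omega)).2 _ _ _ _ _ le_rfl Hargs
          have h2 := (IH n' (by omega)).1 _ _ _ _ _ le_rfl Hbody
          have h3 : sizeOf d.body < S := HS d (mem_of_getElem?' hd)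
          simp only [List.length_append, List.length_cons, Exp.call.sizeOf_spec]
          have hexp : S * (hs.length + (h'.length + 1)) =
              S * hs.length + S * h'.length + S := by ring
          rw [hexp]
          linarith
    refine ⟨hP, ?_⟩
    intro ρ es ws m hs hm H
    cases H with
    | nil => simp
    | @cons _ e es' v' vs n' m' h' hs' Hh Ht =>
        have hp1 := evalH_pos Hh
        have h1 := hP _ _ _ _ _ (by omega) Hh
        have h2 := (IH m' (by omega)).2 _ _ _ _ _ le_rfl Ht
        simp only [List.length_append, Nat.mul_add, List.cons.sizeOf_spec]
        linarith

end Chain2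
section Chain3

/-- In a tail-recursive program, every configuration in the call history of a
tail-position expression evaluates (via its body) to the final value, with the
remaining history as its own history. -/
theorem tail_all (p : Prog) (htr : TRProg p) : ∀ N : Nat,
    ∀ ρ e v n h, n ≤ N → alpha e ≤ 1 → EvalH p ρ e v n h →
    ∀ h1 f ws h2, h = h1 ++ (f, ws) :: h2 →
    ∃ d n2, p[f]? = some d ∧ EvalH p ws d.body v n2 h2 := by
  intro N
  induction N using Nat.strong_induction_on with
  | _ N IH =>
    intro ρ e v n h hn ha H h1 f ws h2 hsplit
    cases H with
    | tt => simp at hsplit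
    | ff => simp at hsplit
    | nil => simp at hsplit
    | var _ => simp at hsplit
    | @base _ op e' v' w n' h' He hb =>
        have hc : hasCall e' = false := by
          rcases Bool.eq_false_or_eq_true (hasCall e') with hc | hc
          · exact absurd ha (by simp [alpha, hc])
          · exact hc
        have := (noCall_all p n').1 _ _ _ _ _ le_rfl hc He
        subst this; simp at hsplit
    | @iteT _ e0 e1 e2 v' n0 n1 h0 h1' He0 He1 =>
        have hc : hasCall e0 = false := by
          rcases Bool.eq_false_or_eq_true (hasCall e0) with hc | hc
          · exact absurd ha (by simp [alpha, hc])
          · exact hc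
        have h0e := (noCall_all p n0).1 _ _ _ _ _ le_rfl hc He0
        subst h0e
        simp only [List.nil_append] at hsplit
        have ha1 : alpha e1 ≤ 1 := by
          simp [alpha, hc] at ha; omega
        have hn1 := evalH_pos He0
        exact IH n1 (by omega) _ _ _ _ _ le_rfl ha1 He1 h1 f ws h2 hsplit
    | @iteF _ e0 e1 e2 v' n0 n2 h0 h2' He0 He2 =>
        have hc : hasCall e0 = false := by
          rcases Bool.eq_false_or_eq_true (hasCall e0) with hc | hc
          · exact absurd ha (by simp [alpha, hc])
          · exact hc
        have h0e := (noCall_all p n0).1 _ _ _ _ _ le_rfl hc He0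
        subst h0e
        simp only [List.nil_append] at hsplit
        have ha2 : alpha e2 ≤ 1 := by
          simp [alpha, hc] at ha; omega
        have hn1 := evalH_pos He0
        exact IH n2 (by omega) _ _ _ _ _ le_rfl ha2 He2 h1 f ws h2 hsplit
    | @ambL _ e1 e2 v' n' h' He =>
        have ha1 : alpha e1 ≤ 1 := by simp [alpha] at ha; omega
        exact IH n' (by omega) _ _ _ _ _ le_rfl ha1 He h1 f ws h2 hsplit
    | @ambR _ e1 e2 v' n' h' He =>
        have ha2 : alpha e2 ≤ 1 := by simp [alpha] at ha; omega
        exact IH n' (by omega) _ _ _ _ _ le_rfl ha2 He h1 f ws h2 hsplit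
    | @call _ f' es ws' d v' m n' hs h' hd Hargs hlen Hbody =>
        have hall : ∀ e' ∈ es, hasCall e' = false := by
          rcases Bool.eq_false_or_eq_true (es.all (fun e => !hasCall e)) with hc | hc
          · intro e' he'
            have := List.all_eq_true.mp hc e' he'
            simpa using this
          · exact absurd ha (by simp [alpha, hc])
        have hhs := (noCall_all p m).2 _ _ _ _ _ le_rfl hall Hargs
        subst hhs
        simp only [List.nil_append] at hsplit
        cases h1 with
        | nil =>
            simp only [List.nil_append, List.cons.injEq, Prod.mk.injEq] at hsplit
            obtain ⟨⟨rfl, rfl⟩, rfl⟩ := hsplit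
            exact ⟨d, n', hd, Hbody⟩
        | cons c0 t =>
            simp only [List.cons_append, List.cons.injEq] at hsplit
            obtain ⟨-, hsplit⟩ := hsplit
            have hab : alpha d.body ≤ 1 := htr d (mem_of_getElem?' hd)
            have hm1 : 1 ≤ m ∨ m = 0 := by omega
            exact IH n' (by omega) _ _ _ _ _ le_rfl hab Hbody t f ws h2 hsplit

theorem sublist_pair_split {α} {a : α} : ∀ {l : List α}, List.Sublist [a, a] l →
    ∃ l1 l2 l3, l = l1 ++ a :: (l2 ++ a :: l3) := by
  intro l h
  induction l with
  | nil => cases h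
  | cons b t ih =>
      cases h with
      | cons _ h' =>
          obtain ⟨l1, l2, l3, rfl⟩ := ih h'
          exact ⟨b :: l1, l2, l3, rfl⟩
      | cons_cons _ h' =>
          have hm : a ∈ t := h'.subset (by simp)
          obtain ⟨s, t', rfl⟩ := List.append_of_mem hm
          exact ⟨[], s, t', rfl⟩

theorem entry_noChoice {p : Prog} (hp : CFProg p) : NoChoice p.entry := by
  cases p with
  | nil => exact NoChoice.tt
  | cons d t => exact hp d List.mem_cons_self

theorem entry_alpha {p : Prog} (hp : TRProg p) : alpha p.entry ≤ 1 := by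
  cases p with
  | nil =>
      decide
  | cons d t => exact hp d List.mem_cons_self

/-- The call history of a run of a CFTR program has no duplicate configurations. -/
theorem hist_nodup {p : Prog} (hp : CFTRProg p) {x v n h} (H : RunH p x v n h) :
    h.Nodup := by
  by_contra hnd
  obtain ⟨c, hdup⟩ := List.exists_duplicate_iff_not_nodup.mpr hnd
  obtain ⟨h1, h2, h3, hsplit⟩ := sublist_pair_split (List.duplicate_iff_sublist.mp hdup)
  obtain ⟨f, ws⟩ := c
  obtain ⟨d, n2, hd, E1⟩ :=
    tail_all p hp.2 n _ _ _ _ _ le_rfl (entry_alpha hp.2) H h1 f ws _ hsplit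
  obtain ⟨d', n3, hd', E2⟩ :=
    tail_all p hp.2 n2 _ _ _ _ _ le_rfl (hp.2 d (mem_of_getElem?' hd)) E1 h2 f ws h3 rfl
  rw [hd] at hd'
  obtain rfl : d = d' := Option.some.inj hd'
  obtain ⟨-, -, hh⟩ := (det_all p hp.1 n2).1 _ _ _ _ _ le_rfl
    (hp.1 d (mem_of_getElem?' hd)) E1 _ _ _ E2
  have := congrArg List.length hh
  simp at this
  omega

end Chain3
section Chain4

/-- Injective encoding of values in `Vx x` as numbers `< x.length + 3`. -/
def encV (x : List Bool) : Val → Nat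
  | .bool b => cond b 1 0
  | .str s => s.length + 2

/-- Injective encoding of lists of values from `Vx x`. -/
def encLst (x : List Bool) : List Val → Nat
  | [] => 0
  | v :: t => (encV x v + 1) + (x.length + 4) * encLst x t

theorem suffix_eq_of_length {s t x : List Bool} (hs : s <:+ x) (ht : t <:+ x)
    (h : s.length = t.length) : s = t := by
  obtain ⟨a, ha⟩ := hs
  obtain ⟨b, hb⟩ := ht
  rw [← hb] at ha
  have hl : a.length = b.length := by
    have := congrArg List.length ha
    simp at this
    omega
  exact (List.append_inj ha hl).2

theorem encV_lt {x : List Bool} {v : Val} (hv : v ∈ Vx x) : encV x v < x.length + 3 := by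
  rcases hv with ⟨b, rfl⟩ | ⟨s, rfl, hsx⟩
  · cases b <;> simp [encV]
  · have := hsx.length_le
    simp [encV]
    omega

theorem encV_inj {x : List Bool} {u v : Val} (hu : u ∈ Vx x) (hv : v ∈ Vx x)
    (h : encV x u = encV x v) : u = v := by
  rcases hu with ⟨b, rfl⟩ | ⟨s, rfl, hsx⟩ <;> rcases hv with ⟨b', rfl⟩ | ⟨s', rfl, hsx'⟩
  · cases b <;> cases b' <;> simp [encV] at h ⊢
  · cases b <;> simp [encV] at h
  · cases b' <;> simp [encV] at h
  · simp [encV] at h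
    rw [suffix_eq_of_length hsx hsx' h]

theorem encLst_lt {x : List Bool} : ∀ l : List Val, (∀ v ∈ l, v ∈ Vx x) →
    encLst x l < (x.length + 4) ^ l.length := by
  intro l
  induction l with
  | nil => intro _; simp [encLst]
  | cons v t ih =>
      intro hl
      have h1 : encV x v < x.length + 3 := encV_lt (hl v (by simp))
      have h2 : encLst x t < (x.length + 4) ^ t.length := ih (fun u hu => hl u (by simp [hu]))
      have h3 : (x.length + 4) * (encLst x t + 1) ≤ (x.length + 4) * (x.length + 4) ^ t.length :=
        Nat.mul_le_mul le_rfl h2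
      simp only [encLst, List.length_cons, pow_succ]
      nlinarith

theorem encLst_inj {x : List Bool} : ∀ l1 l2 : List Val, (∀ v ∈ l1, v ∈ Vx x) →
    (∀ v ∈ l2, v ∈ Vx x) → encLst x l1 = encLst x l2 → l1 = l2 := by
  intro l1
  induction l1 with
  | nil =>
      intro l2 _ _ h
      cases l2 with
      | nil => rfl
      | cons v t => simp [encLst] at h; omega
  | cons v t ih =>
      intro l2 h1 h2 h
      cases l2 with
      | nil => simp [encLst] at h
      | cons v' t' =>
          simp only [encLst] at h
          have hv : encV x v < x.length + 3 := encV_lt (h1 v (by simp))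
          have hv' : encV x v' < x.length + 3 := encV_lt (h2 v' (by simp))
          have hmod := congrArg (· % (x.length + 4)) h
          simp only [Nat.add_mul_mod_self_left] at hmod
          rw [Nat.mod_eq_of_lt (show encV x v + 1 < x.length + 4 by omega),
            Nat.mod_eq_of_lt (show encV x v' + 1 < x.length + 4 by omega)] at hmod
          have hvv : v = v' := encV_inj (h1 v (by simp)) (h2 v' (by simp)) (by omega)
          have htt : encLst x t = encLst x t' := by
            rw [hmod] at h
            exact Nat.eq_of_mul_eq_mul_left (show 0 < x.length + 4 by omega)
              (Nat.add_left_cancel h)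
          rw [hvv, ih t' (fun u hu => h1 u (by simp [hu])) (fun u hu => h2 u (by simp [hu])) htt]

/-- A duplicate-free list of well-formed configurations has polynomially bounded length. -/
theorem nodup_length_le (P A : Nat) (x : List Bool) (h : List (Nat × List Val))
    (hnd : h.Nodup)
    (hel : ∀ c ∈ h, c.1 < P ∧ c.2.length ≤ A ∧ ∀ u ∈ c.2, u ∈ Vx x) :
    h.length ≤ P * (x.length + 4) ^ A := by
  set f : Nat × List Val → Nat := fun c => c.1 + P * encLst x c.2 with hf
  have hinj : ∀ c ∈ h, ∀ c' ∈ h, f c = f c' → c = c' := by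
    intro c hc c' hc' hfc
    obtain ⟨hc1, -, hc3⟩ := hel c hc
    obtain ⟨hc1', -, hc3'⟩ := hel c' hc'
    have hfc' : c.1 + P * encLst x c.2 = c'.1 + P * encLst x c'.2 := hfc
    have hmod := congrArg (· % P) hfc'
    simp only [Nat.add_mul_mod_self_left] at hmod
    rw [Nat.mod_eq_of_lt hc1, Nat.mod_eq_of_lt hc1'] at hmod
    have h2 : encLst x c.2 = encLst x c'.2 := by
      rw [hmod] at hfc'
      exact Nat.eq_of_mul_eq_mul_left (Nat.lt_of_le_of_lt (Nat.zero_le _) hc1)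
        (Nat.add_left_cancel hfc')
    have := encLst_inj c.2 c'.2 hc3 hc3' h2
    exact Prod.ext hmod this
  have hmap : (h.map f).Nodup := hnd.map_on hinj
  have hbound : ∀ y ∈ h.map f, y < P * (x.length + 4) ^ A := by
    intro y hy
    obtain ⟨c, hc, rfl⟩ := List.mem_map.mp hy
    obtain ⟨hc1, hc2, hc3⟩ := hel c hc
    have h1 : encLst x c.2 + 1 ≤ (x.length + 4) ^ A := by
      have := encLst_lt c.2 hc3
      have hp : (x.length + 4) ^ c.2.length ≤ (x.length + 4) ^ A :=
        Nat.pow_le_pow_right (by omega) hc2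
      omega
    have h2 : P * (encLst x c.2 + 1) ≤ P * (x.length + 4) ^ A := Nat.mul_le_mul le_rfl h1
    simp only [hf]
    nlinarith
  have hsub : (h.map f).toFinset ⊆ Finset.range (P * (x.length + 4) ^ A) := by
    intro y hy
    rw [Finset.mem_range]
    exact hbound y (List.mem_toFinset.mp hy)
  calc h.length = (h.map f).length := (List.length_map _).symm
    _ = (h.map f).toFinset.card := (List.toFinset_card_of_nodup hmap).symm
    _ ≤ (Finset.range (P * (x.length + 4) ^ A)).card := Finset.card_le_card hsub
    _ = P * (x.length + 4) ^ A := Finset.card_range _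

/-- Every terminating CFTR program is a CFpoly program. -/
theorem cftr_terminating_cfpoly (p : Prog) (hp : CFTRProg p)
    (hterm : ∀ x : List Bool, ∃ v, Run p x v) : CFpolyProg p := by
  refine ⟨hp.1, hterm, ?_⟩
  set A := (p.map Defn.arity).sum with hA
  set S := (p.map fun d => sizeOf d.body).sum + 1 with hS
  refine ⟨Polynomial.C (sizeOf p.entry) +
    Polynomial.C (S * p.length) * (Polynomial.X + Polynomial.C 4) ^ A, ?_⟩
  intro x n hT
  obtain ⟨v, h, H⟩ := hT
  have HS : ∀ d ∈ p, sizeOf d.body < S := by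
    intro d hd
    have : sizeOf d.body ≤ (p.map fun d => sizeOf d.body).sum :=
      List.single_le_sum (fun _ _ => Nat.zero_le _) _
        (List.mem_map_of_mem (f := fun d : Defn => sizeOf d.body) hd)
    omega
  have hsz : n ≤ sizeOf p.entry + S * h.length :=
    (size_all p S HS n).1 _ _ _ _ _ le_rfl H
  have hρ : ∀ u ∈ [Val.str x], u ∈ Vx x := by
    intro u hu
    simp at hu
    subst hu
    exact Or.inr ⟨x, rfl, List.suffix_refl x⟩
  have hel := ((vx_all p x n).1 _ _ _ _ _ le_rfl H hρ).2
  have hel' : ∀ c ∈ h, c.1 < p.length ∧ c.2.length ≤ A ∧ ∀ u ∈ c.2, u ∈ Vx x := by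
    intro c hc
    obtain ⟨hvx, d, hd, hlen⟩ := hel c hc
    refine ⟨lt_length_of_getElem?' hd, ?_, hvx⟩
    rw [hlen]
    exact List.single_le_sum (fun _ _ => Nat.zero_le _) _
      (List.mem_map_of_mem (f := Defn.arity) (mem_of_getElem?' hd))
  have hnd := hist_nodup hp H
  have hlen := nodup_length_le p.length A x h hnd hel'
  have hfinal : n ≤ sizeOf p.entry + S * p.length * (x.length + 4) ^ A := by
    have h2 : S * h.length ≤ S * (p.length * (x.length + 4) ^ A) :=
      Nat.mul_le_mul le_rfl hlen
    calc n ≤ sizeOf p.entry + S * h.length := hsz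
      _ ≤ sizeOf p.entry + S * (p.length * (x.length + 4) ^ A) := by omega
      _ = sizeOf p.entry + S * p.length * (x.length + 4) ^ A := by ring
  simpa [Polynomial.eval_add, Polynomial.eval_mul, Polynomial.eval_pow,
    Polynomial.eval_C, Polynomial.eval_X] using hfinal

end Chain4

/-- every terminating CFTR program is a CFpoly program, and the chain
`decide[CFTR] ⊆ decide[CFpoly] ⊆ decide[CF]` holds. -/
theorem decide_inclusion_chain :
    (∀ p : Prog, CFTRProg p → (∀ x : List Bool, ∃ v, Run p x v) → CFpolyProg p) ∧
    decideCFTR ⊆ decideCFpoly ∧ decideCFpoly ⊆ decideCF := by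
  refine ⟨cftr_terminating_cfpoly, ?_, ?_⟩
  · rintro X ⟨p, hp, hdec⟩
    refine ⟨p, cftr_terminating_cfpoly p hp ?_, hdec⟩
    intro x
    rcases hdec x with ⟨-, hr⟩ | ⟨-, hr⟩ <;> exact ⟨_, hr⟩
  · rintro X ⟨p, hp, hdec⟩
    exact ⟨p, hp.1, hdec⟩
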